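/- Let T(s) = C(sI − A)⁻¹B + D be a transfer function with A ∈ ℝ^{n×n}, B ∈ ℝ^{n×q}, C ∈ ℝ^{p×n}, D ∈ ℝ^{p×q}, ξ > 0 with D_ξ := DᵀD − ξ²I nonsingular, and ω ∈ ℝ with jω not an eigenvalue of A. Then T(jω) has a singular value equal to ξ if and only if jω is an eigenvalue of the Hamiltonian matrix H_ξ = [[A − B D_ξ⁻¹ Dᵀ C, −B D_ξ⁻¹ Bᵀ], [ξ² Cᵀ (D_ξ⁻ᵀ) C, −Aᵀ + Cᵀ D D_ξ⁻¹ Bᵀ]]. -/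

import Mathlib

open Matrix

section Stmt2Aux

variable {a b c : ℕ}

lemma mapC_mul (X : Matrix (Fin a) (Fin b) ℝ) (Y : Matrix (Fin b) (Fin c) ℝ) :
    (X * Y).map Complex.ofReal = X.map Complex.ofReal * Y.map Complex.ofReal :=
  Matrix.map_mul (f := Complex.ofRealHom)

lemma mapC_sub (X Y : Matrix (Fin a) (Fin b) ℝ) :
    (X - Y).map Complex.ofReal = X.map Complex.ofReal - Y.map Complex.ofReal := by
  ext i j; simp [Matrix.map_apply]

lemma mapC_add (X Y : Matrix (Fin a) (Fin b) ℝ) :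
    (X + Y).map Complex.ofReal = X.map Complex.ofReal + Y.map Complex.ofReal := by
  ext i j; simp [Matrix.map_apply]

lemma mapC_neg (X : Matrix (Fin a) (Fin b) ℝ) :
    (-X).map Complex.ofReal = -(X.map Complex.ofReal) := by
  ext i j; simp [Matrix.map_apply]

lemma mapC_smul (r : ℝ) (X : Matrix (Fin a) (Fin b) ℝ) :
    (r • X).map Complex.ofReal = (r : ℂ) • X.map Complex.ofReal := by
  ext i j; simp [Matrix.map_apply]

lemma mapC_one : ((1 : Matrix (Fin a) (Fin a) ℝ)).map Complex.ofReal = 1 :=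
  Matrix.map_one _ (by simp) (by simp)

lemma mapC_transpose (X : Matrix (Fin a) (Fin b) ℝ) :
    Xᵀ.map Complex.ofReal = (X.map Complex.ofReal)ᵀ := Matrix.transpose_map

lemma mapC_conjT (X : Matrix (Fin a) (Fin b) ℝ) :
    (X.map Complex.ofReal)ᴴ = (X.map Complex.ofReal)ᵀ := by
  ext i j; simp [Matrix.conjTranspose_apply, Matrix.map_apply, Complex.conj_ofReal]

lemma mapC_det (X : Matrix (Fin a) (Fin a) ℝ) :
    (X.map Complex.ofReal).det = Complex.ofReal X.det :=
  (RingHom.map_det Complex.ofRealHom X).symm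

lemma mapC_inv {X : Matrix (Fin a) (Fin a) ℝ} (h : IsUnit X) :
    (X⁻¹).map Complex.ofReal = (X.map Complex.ofReal)⁻¹ := by
  have h1 : X * X⁻¹ = 1 := Matrix.mul_nonsing_inv X ((Matrix.isUnit_iff_isUnit_det X).mp h)
  refine (Matrix.inv_eq_right_inv ?_).symm
  rw [← mapC_mul, h1, mapC_one]

lemma star_mulVec_real (X : Matrix (Fin a) (Fin b) ℝ) (v : Fin b → ℂ) :
    (X.map Complex.ofReal).mulVec (star v) = star ((X.map Complex.ofReal).mulVec v) := by
  ext i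
  simp [Matrix.mulVec, dotProduct, Matrix.map_apply, Complex.conj_ofReal, mul_comm]

lemma fromBlocks_sub {α : Type*} [Sub α] {l m n o : Type*}
    (A : Matrix n l α) (B : Matrix n m α) (C : Matrix o l α) (D : Matrix o m α)
    (A' : Matrix n l α) (B' : Matrix n m α) (C' : Matrix o l α) (D' : Matrix o m α) :
    fromBlocks A B C D - fromBlocks A' B' C' D' =
      fromBlocks (A - A') (B - B') (C - C') (D - D') := by
  ext i j
  rcases i with i | i <;> rcases j with j | j <;> simp [Matrix.fromBlocks, Matrix.sub_apply]

lemma fromBlocks_congr {α : Type*} {l m n o : Type*}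
    {A A' : Matrix n l α} {B B' : Matrix n m α} {C C' : Matrix o l α} {D D' : Matrix o m α}
    (hA : A = A') (hB : B = B') (hC : C = C') (hD : D = D') :
    fromBlocks A B C D = fromBlocks A' B' C' D' := by rw [hA, hB, hC, hD]

lemma det_aux {pp qq : ℕ} (ξ : ℝ) (hξ : ξ ≠ 0) (D : Matrix (Fin pp) (Fin qq) ℝ) :
    (D * Dᵀ - ξ ^ 2 • (1 : Matrix (Fin pp) (Fin pp) ℝ)).det * (-ξ ^ 2) ^ qq =
      (Dᵀ * D - ξ ^ 2 • (1 : Matrix (Fin qq) (Fin qq) ℝ)).det * (-ξ ^ 2) ^ pp := by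
  have hc : (ξ ^ 2 : ℝ) ≠ 0 := pow_ne_zero _ hξ
  have e1 : D * Dᵀ - ξ ^ 2 • (1 : Matrix (Fin pp) (Fin pp) ℝ) =
      (-ξ ^ 2) • (1 + ((-(ξ ^ 2)⁻¹) • D) * Dᵀ) := by
    rw [smul_add, Matrix.smul_mul, smul_smul]
    field_simp
    module
  have e2 : Dᵀ * D - ξ ^ 2 • (1 : Matrix (Fin qq) (Fin qq) ℝ) =
      (-ξ ^ 2) • (1 + Dᵀ * ((-(ξ ^ 2)⁻¹) • D)) := by
    rw [smul_add, Matrix.mul_smul, smul_smul]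
    field_simp
    module
  rw [e1, e2, Matrix.det_smul, Matrix.det_smul, Matrix.det_one_add_mul_comm]
  simp [Fintype.card_fin]
  ring

end Stmt2Aux

/-- For T(s) = C(sI−A)⁻¹B + D with D_ξ = DᵀD − ξ²I nonsingular and jω
not an eigenvalue of A, T(jω) has a singular value equal to ξ iff jω is an eigenvalue
of the Hamiltonian matrix H_ξ. (In the (2,1) block, `D_ξ⁻ᵀ` is the p×p companion
matrix (DDᵀ − ξ²I)⁻ᵀ, as dimensions dictate; it is invertible since D_ξ is.) -/
theorem stmt2 (n p q : ℕ) (A : Matrix (Fin n) (Fin n) ℝ) (B : Matrix (Fin n) (Fin q) ℝ)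
    (C : Matrix (Fin p) (Fin n) ℝ) (D : Matrix (Fin p) (Fin q) ℝ) (ξ ω : ℝ) (hξ : 0 < ξ)
    (hDξ : IsUnit (Dᵀ * D - ξ ^ 2 • (1 : Matrix (Fin q) (Fin q) ℝ)))
    (hω : ∀ v : Fin n → ℂ, (A.map Complex.ofReal).mulVec v = (Complex.I * ω) • v → v = 0) :
    let Dξ : Matrix (Fin q) (Fin q) ℝ := Dᵀ * D - ξ ^ 2 • 1
    let Sξ : Matrix (Fin p) (Fin p) ℝ := D * Dᵀ - ξ ^ 2 • 1
    let T : Matrix (Fin p) (Fin q) ℂ :=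
      (C.map Complex.ofReal) *
        ((Complex.I * ω) • (1 : Matrix (Fin n) (Fin n) ℂ) - A.map Complex.ofReal)⁻¹ *
        (B.map Complex.ofReal) + D.map Complex.ofReal
    let Hξ : Matrix (Fin n ⊕ Fin n) (Fin n ⊕ Fin n) ℝ :=
      Matrix.fromBlocks (A - B * Dξ⁻¹ * Dᵀ * C) (-(B * Dξ⁻¹ * Bᵀ))
        (ξ ^ 2 • (Cᵀ * (Sξᵀ)⁻¹ * C)) (-Aᵀ + Cᵀ * D * Dξ⁻¹ * Bᵀ)
    ((∃ u : Fin q → ℂ, u ≠ 0 ∧ (Tᴴ * T).mulVec u = ((ξ : ℂ) ^ 2) • u) ↔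
      (∃ w : Fin n ⊕ Fin n → ℂ, w ≠ 0 ∧
        (Hξ.map Complex.ofReal).mulVec w = (Complex.I * ω) • w)) := by
  intro Dξ Sξ T Hξ
  have hDξdef : Dξ = Dᵀ * D - ξ ^ 2 • 1 := rfl
  have hSξdef : Sξ = D * Dᵀ - ξ ^ 2 • 1 := rfl
  set Ac := A.map Complex.ofReal with hAc
  set Bc := B.map Complex.ofReal with hBc
  set Cc := C.map Complex.ofReal with hCc
  set Dc := D.map Complex.ofReal with hDc
  set s : ℂ := Complex.I * (ω : ℂ) with hs
  set E : Matrix (Fin n) (Fin n) ℂ := s • 1 - Ac with hE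
  set Fm : Matrix (Fin n) (Fin n) ℂ := s • 1 + Acᵀ with hFm
  set P : Matrix (Fin q) (Fin q) ℂ := Dcᵀ * Dc - (ξ : ℂ) ^ 2 • 1 with hP
  set Sm : Matrix (Fin p) (Fin p) ℂ := Dc * Dcᵀ - (ξ : ℂ) ^ 2 • 1 with hSm
  have hTdef : T = Cc * E⁻¹ * Bc + Dc := rfl
  set G : Matrix (Fin p) (Fin q) ℂ := Cc * E⁻¹ * Bc with hG
  set H' : Matrix (Fin q) (Fin p) ℂ := Bcᵀ * Fm⁻¹ * Ccᵀ with hH'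
  have hξ0 : (ξ : ℝ) ≠ 0 := ne_of_gt hξ
  -- determinant nonvanishing facts
  have hEdet : E.det ≠ 0 := by
    intro h0
    obtain ⟨v, hv0, hv⟩ := Matrix.exists_mulVec_eq_zero_iff.mpr h0
    rw [hE, Matrix.sub_mulVec, Matrix.smul_mulVec, Matrix.one_mulVec, sub_eq_zero] at hv
    exact hv0 (hω v hv.symm)
  have hEunit : IsUnit E.det := isUnit_iff_ne_zero.mpr hEdet
  have hFdet : Fm.det ≠ 0 := by
    have h2 : Fm = (s • 1 + Ac)ᵀ := by
      rw [hFm, Matrix.transpose_add, Matrix.transpose_smul, Matrix.transpose_one]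
    rw [h2, Matrix.det_transpose]
    intro h0
    obtain ⟨v, hv0, hv⟩ := Matrix.exists_mulVec_eq_zero_iff.mpr h0
    rw [Matrix.add_mulVec, Matrix.smul_mulVec, Matrix.one_mulVec] at hv
    have hv' : Ac.mulVec v = (-s) • v := by
      rw [neg_smul, eq_neg_iff_add_eq_zero, add_comm]; exact hv
    have hstar : Ac.mulVec (star v) = s • star v := by
      rw [hAc, star_mulVec_real, hv', star_smul]
      congr 1
      rw [hs]
      simp [Complex.conj_ofReal]
    have := hω (star v) hstar
    exact hv0 (by simpa [star_eq_zero] using this)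
  have hFunit : IsUnit Fm.det := isUnit_iff_ne_zero.mpr hFdet
  have hPmap : Dξ.map Complex.ofReal = P := by
    rw [hDξdef, mapC_sub, mapC_mul, mapC_smul, mapC_one, mapC_transpose, hP]
    push_cast
    rfl
  have hDξdet : Dξ.det ≠ 0 := by
    have := (Matrix.isUnit_iff_isUnit_det Dξ).mp hDξ
    exact this.ne_zero
  have hPdet : P.det ≠ 0 := by
    rw [← hPmap, mapC_det]
    exact_mod_cast hDξdet
  have hPunit : IsUnit P.det := isUnit_iff_ne_zero.mpr hPdet
  have hSξdet : Sξ.det ≠ 0 := by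
    have hda := det_aux ξ hξ0 D
    rw [← hSξdef, ← hDξdef] at hda
    intro h0
    rw [h0, zero_mul] at hda
    have h2 : ((-ξ ^ 2 : ℝ)) ^ p ≠ 0 := pow_ne_zero _ (neg_ne_zero.mpr (pow_ne_zero 2 hξ0))
    exact hDξdet ((mul_eq_zero.mp hda.symm).resolve_right h2)
  have hSξunit : IsUnit Sξ := (Matrix.isUnit_iff_isUnit_det Sξ).mpr (isUnit_iff_ne_zero.mpr hSξdet)
  have hSmap : Sξ.map Complex.ofReal = Sm := by
    rw [hSξdef, mapC_sub, mapC_mul, mapC_smul, mapC_one, mapC_transpose, hSm]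
    push_cast
    rfl
  have hSmdet : Sm.det ≠ 0 := by
    rw [← hSmap, mapC_det]
    exact_mod_cast hSξdet
  have hSmunit : IsUnit Sm.det := isUnit_iff_ne_zero.mpr hSmdet
  -- inverse identities
  have hEEi : E * E⁻¹ = 1 := Matrix.mul_nonsing_inv E hEunit
  have hFFi : Fm * Fm⁻¹ = 1 := Matrix.mul_nonsing_inv Fm hFunit
  have hPPi : P * P⁻¹ = 1 := Matrix.mul_nonsing_inv P hPunit
  have hSSi : Sm * Sm⁻¹ = 1 := Matrix.mul_nonsing_inv Sm hSmunit
  -- conjugate transpose of T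
  have hstars : star s = -s := by rw [hs]; simp [Complex.conj_ofReal]
  have hEH : Eᴴ = -Fm := by
    rw [hE, hFm]
    rw [Matrix.conjTranspose_sub, Matrix.conjTranspose_smul, Matrix.conjTranspose_one]
    rw [hAc, mapC_conjT, hstars]
    rw [neg_smul]
    abel
  have hFinvneg : (-Fm)⁻¹ = -Fm⁻¹ := by
    refine Matrix.inv_eq_right_inv ?_
    rw [Matrix.neg_mul, Matrix.mul_neg, neg_neg, hFFi]
  have hTH : Tᴴ = Dcᵀ - H' := by
    rw [hTdef, Matrix.conjTranspose_add, Matrix.conjTranspose_mul, Matrix.conjTranspose_mul,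
      Matrix.conjTranspose_nonsing_inv, hEH, hFinvneg]
    rw [hBc, mapC_conjT, hCc, mapC_conjT, hDc, mapC_conjT]
    rw [hH']
    simp only [Matrix.neg_mul, Matrix.mul_neg, Matrix.mul_assoc]
    abel
  -- the complexified Hamiltonian
  have hHξdef : Hξ = Matrix.fromBlocks (A - B * Dξ⁻¹ * Dᵀ * C) (-(B * Dξ⁻¹ * Bᵀ))
      (ξ ^ 2 • (Cᵀ * (Sξᵀ)⁻¹ * C)) (-Aᵀ + Cᵀ * D * Dξ⁻¹ * Bᵀ) := rfl
  have hSξT : Sξᵀ = Sξ := by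
    rw [hSξdef]
    rw [Matrix.transpose_sub, Matrix.transpose_mul, Matrix.transpose_smul,
      Matrix.transpose_one, Matrix.transpose_transpose]
  have hHc : Hξ.map Complex.ofReal =
      Matrix.fromBlocks (Ac - Bc * P⁻¹ * Dcᵀ * Cc) (-(Bc * P⁻¹ * Bcᵀ))
        ((ξ : ℂ) ^ 2 • (Ccᵀ * Sm⁻¹ * Cc)) (-Acᵀ + Ccᵀ * Dc * P⁻¹ * Bcᵀ) := by
    rw [hHξdef, hSξT, Matrix.fromBlocks_map]
    simp only [mapC_sub, mapC_add, mapC_neg, mapC_mul, mapC_smul, mapC_transpose,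
      mapC_inv (X := Dξ) hDξ, mapC_inv hSξunit, hPmap, hSmap, Complex.ofReal_pow]
    rfl
  -- block matrices for the Weinstein–Aronszajn factorization
  set X : Matrix (Fin n ⊕ Fin n) (Fin n ⊕ Fin n) ℂ := Matrix.fromBlocks E 0 0 Fm with hX
  set Xi : Matrix (Fin n ⊕ Fin n) (Fin n ⊕ Fin n) ℂ := Matrix.fromBlocks E⁻¹ 0 0 Fm⁻¹ with hXi
  set U : Matrix (Fin n ⊕ Fin n) (Fin q ⊕ Fin p) ℂ := Matrix.fromBlocks Bc 0 0 Ccᵀ with hU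
  set K : Matrix (Fin q ⊕ Fin p) (Fin p ⊕ Fin q) ℂ :=
    Matrix.fromBlocks (P⁻¹ * Dcᵀ) P⁻¹ (-((ξ : ℂ) ^ 2 • Sm⁻¹)) (-(Dc * P⁻¹)) with hK
  set V : Matrix (Fin p ⊕ Fin q) (Fin n ⊕ Fin n) ℂ := Matrix.fromBlocks Cc 0 0 Bcᵀ with hV
  set GH : Matrix (Fin p ⊕ Fin q) (Fin q ⊕ Fin p) ℂ := Matrix.fromBlocks G 0 0 H' with hGH
  have hXXi : X * Xi = 1 := by
    rw [hX, hXi, Matrix.fromBlocks_multiply]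
    simp only [Matrix.mul_zero, Matrix.zero_mul, add_zero, zero_add, hEEi, hFFi]
    exact Matrix.fromBlocks_one
  have hKV : K * V = Matrix.fromBlocks (P⁻¹ * Dcᵀ * Cc) (P⁻¹ * Bcᵀ)
      (-((ξ : ℂ) ^ 2 • Sm⁻¹) * Cc) (-(Dc * P⁻¹) * Bcᵀ) := by
    rw [hK, hV, Matrix.fromBlocks_multiply]
    simp only [Matrix.mul_zero, Matrix.zero_mul, add_zero, zero_add]
  have hone2 : s • (1 : Matrix (Fin n ⊕ Fin n) (Fin n ⊕ Fin n) ℂ) =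
      Matrix.fromBlocks (s • 1) 0 0 (s • 1) := by
    rw [← Matrix.fromBlocks_one, Matrix.fromBlocks_smul]
    simp
  have h1 : s • (1 : Matrix (Fin n ⊕ Fin n) (Fin n ⊕ Fin n) ℂ) - Hξ.map Complex.ofReal
      = X + U * (K * V) := by
    rw [hKV, hU, Matrix.fromBlocks_multiply]
    simp only [Matrix.mul_zero, Matrix.zero_mul, add_zero, zero_add]
    rw [hHc, hX, hone2, fromBlocks_sub, Matrix.fromBlocks_add]
    refine fromBlocks_congr ?_ ?_ ?_ ?_
    · rw [hE]; simp only [Matrix.mul_assoc]; abel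
    · simp only [Matrix.mul_assoc]; abel
    · simp only [Matrix.neg_mul, Matrix.mul_neg, Matrix.smul_mul, Matrix.mul_smul,
        Matrix.mul_assoc]
      abel
    · rw [hFm]; simp only [Matrix.neg_mul, Matrix.mul_neg, Matrix.mul_assoc]; abel
  have h2 : X * (1 + Xi * (U * (K * V))) = X + U * (K * V) := by
    rw [Matrix.mul_add, Matrix.mul_one, ← Matrix.mul_assoc, hXXi, Matrix.one_mul]
  have hXiU : Xi * U = Matrix.fromBlocks (E⁻¹ * Bc) 0 0 (Fm⁻¹ * Ccᵀ) := by
    rw [hXi, hU, Matrix.fromBlocks_multiply]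
    simp only [Matrix.mul_zero, Matrix.zero_mul, add_zero, zero_add]
  have hVXiU : V * (Xi * U) = GH := by
    rw [hXiU, hV, Matrix.fromBlocks_multiply, hGH]
    simp only [Matrix.mul_zero, Matrix.zero_mul, add_zero, zero_add]
    exact fromBlocks_congr (by rw [hG, Matrix.mul_assoc]) rfl rfl (by rw [hH', Matrix.mul_assoc])
  have hdX : X.det = E.det * Fm.det := by rw [hX]; exact Matrix.det_fromBlocks_zero₂₁ _ _ _
  set Wm : Matrix (Fin q ⊕ Fin p) (Fin q ⊕ Fin p) ℂ := 1 + K * GH with hWm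
  have dHc : (s • 1 - Hξ.map Complex.ofReal).det = E.det * Fm.det * Wm.det := by
    rw [h1, ← h2, Matrix.det_mul, hdX]
    congr 1
    rw [← Matrix.mul_assoc, Matrix.det_one_add_mul_comm, Matrix.mul_assoc, hVXiU, hWm]
  -- row reduction of Wm
  set PS : Matrix (Fin q ⊕ Fin p) (Fin q ⊕ Fin p) ℂ := Matrix.fromBlocks P 0 0 Sm with hPS
  have hSmDc : Sm * Dc = Dc * P := by
    rw [hSm, hP]
    simp only [Matrix.sub_mul, Matrix.mul_sub, Matrix.smul_mul, Matrix.mul_smul,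
      Matrix.mul_assoc, Matrix.mul_one, Matrix.one_mul]
  have hPSK : PS * K = Matrix.fromBlocks Dcᵀ 1 (-((ξ : ℂ) ^ 2 • 1)) (-Dc) := by
    rw [hPS, hK, Matrix.fromBlocks_multiply]
    simp only [Matrix.mul_zero, Matrix.zero_mul, add_zero, zero_add]
    refine fromBlocks_congr ?_ hPPi ?_ ?_
    · rw [← Matrix.mul_assoc, hPPi, Matrix.one_mul]
    · rw [Matrix.mul_neg, Matrix.mul_smul, hSSi]
    · rw [Matrix.mul_neg, ← Matrix.mul_assoc, hSmDc, Matrix.mul_assoc, hPPi, Matrix.mul_one]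
  have hPSKGH : PS * K * GH =
      Matrix.fromBlocks (Dcᵀ * G) H' (-((ξ : ℂ) ^ 2 • G)) (-(Dc * H')) := by
    rw [hPSK, hGH, Matrix.fromBlocks_multiply]
    simp only [Matrix.mul_zero, Matrix.zero_mul, add_zero, zero_add, Matrix.one_mul,
      Matrix.neg_mul, Matrix.smul_mul]
  set KK : Matrix (Fin q) (Fin q) ℂ := Tᴴ * T - (ξ : ℂ) ^ 2 • 1 with hKK
  have h4 : PS * Wm = Matrix.fromBlocks (Dcᵀ * T - (ξ : ℂ) ^ 2 • 1) (Dcᵀ - Tᴴ)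
      ((ξ : ℂ) ^ 2 • Dc - (ξ : ℂ) ^ 2 • T) (Dc * Tᴴ - (ξ : ℂ) ^ 2 • 1) := by
    rw [hWm, Matrix.mul_add, Matrix.mul_one, ← Matrix.mul_assoc, hPSKGH, hPS,
      Matrix.fromBlocks_add]
    refine fromBlocks_congr ?_ ?_ ?_ ?_
    · rw [hTdef, hP, Matrix.mul_add]; abel
    · rw [hTH]; abel
    · rw [hTdef, smul_add]; abel
    · rw [hTH, hSm, Matrix.mul_sub]; abel
  have hdPS : PS.det = P.det * Sm.det := by rw [hPS]; exact Matrix.det_fromBlocks_zero₂₁ _ _ _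
  have h5 : Matrix.fromBlocks (Dcᵀ * T - (ξ : ℂ) ^ 2 • 1) (Dcᵀ - Tᴴ)
      ((ξ : ℂ) ^ 2 • Dc - (ξ : ℂ) ^ 2 • T) (Dc * Tᴴ - (ξ : ℂ) ^ 2 • 1)
      * Matrix.fromBlocks 1 0 (-T) 1 =
      Matrix.fromBlocks KK (Dcᵀ - Tᴴ) (-(Dc * KK)) (Dc * Tᴴ - (ξ : ℂ) ^ 2 • 1) := by
    rw [Matrix.fromBlocks_multiply]
    simp only [Matrix.mul_zero, Matrix.zero_mul, add_zero, zero_add, Matrix.mul_one]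
    refine fromBlocks_congr ?_ rfl ?_ rfl
    · rw [hKK]
      simp only [Matrix.sub_mul, Matrix.mul_neg, Matrix.mul_one]
      abel
    · rw [hKK]
      simp only [Matrix.sub_mul, Matrix.mul_neg, Matrix.mul_one, Matrix.mul_sub,
        Matrix.mul_smul, Matrix.smul_mul, Matrix.one_mul, Matrix.mul_assoc]
      abel
  have h6 : Matrix.fromBlocks 1 0 Dc 1 *
      Matrix.fromBlocks KK (Dcᵀ - Tᴴ) (-(Dc * KK)) (Dc * Tᴴ - (ξ : ℂ) ^ 2 • 1) =
      Matrix.fromBlocks KK (Dcᵀ - Tᴴ) 0 Sm := by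
    rw [Matrix.fromBlocks_multiply]
    simp only [Matrix.mul_zero, Matrix.zero_mul, add_zero, zero_add, Matrix.one_mul,
      Matrix.mul_one]
    refine fromBlocks_congr rfl rfl ?_ ?_
    · abel
    · rw [hSm, Matrix.mul_sub]; abel
  have dtriangle1 : (Matrix.fromBlocks (1 : Matrix (Fin q) (Fin q) ℂ) 0 (-T)
      (1 : Matrix (Fin p) (Fin p) ℂ)).det = 1 := by
    rw [Matrix.det_fromBlocks_zero₁₂]; simp
  have dtriangle2 : (Matrix.fromBlocks (1 : Matrix (Fin q) (Fin q) ℂ) 0 Dc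
      (1 : Matrix (Fin p) (Fin p) ℂ)).det = 1 := by
    rw [Matrix.det_fromBlocks_zero₁₂]; simp
  have dM2 : (Matrix.fromBlocks KK (Dcᵀ - Tᴴ) (-(Dc * KK))
      (Dc * Tᴴ - (ξ : ℂ) ^ 2 • 1)).det = KK.det * Sm.det := by
    have h := congrArg Matrix.det h6
    rw [Matrix.det_mul, dtriangle2, one_mul] at h
    rw [h, Matrix.det_fromBlocks_zero₂₁]
  have dM : (Matrix.fromBlocks (Dcᵀ * T - (ξ : ℂ) ^ 2 • 1) (Dcᵀ - Tᴴ)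
      ((ξ : ℂ) ^ 2 • Dc - (ξ : ℂ) ^ 2 • T) (Dc * Tᴴ - (ξ : ℂ) ^ 2 • 1)).det
      = KK.det * Sm.det := by
    have h := congrArg Matrix.det h5
    rw [Matrix.det_mul, dtriangle1, mul_one] at h
    rw [h, dM2]
  have grand : P.det * Sm.det * Wm.det = KK.det * Sm.det := by
    have h := congrArg Matrix.det h4
    rw [Matrix.det_mul, hdPS] at h
    rw [h, dM]
  have hPW : P.det * Wm.det = KK.det := by
    apply mul_right_cancel₀ hSmdet
    calc P.det * Wm.det * Sm.det = P.det * Sm.det * Wm.det := by ring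
    _ = KK.det * Sm.det := grand
  have L1 : (∃ u : Fin q → ℂ, u ≠ 0 ∧ (Tᴴ * T).mulVec u = ((ξ : ℂ) ^ 2) • u) ↔ KK.det = 0 := by
    rw [hKK, ← Matrix.exists_mulVec_eq_zero_iff]
    apply exists_congr; intro u
    apply and_congr_right'
    rw [Matrix.sub_mulVec, Matrix.smul_mulVec, Matrix.one_mulVec, sub_eq_zero]
  have L2 : (∃ w : Fin n ⊕ Fin n → ℂ, w ≠ 0 ∧ (Hξ.map Complex.ofReal).mulVec w = s • w) ↔
      (s • 1 - Hξ.map Complex.ofReal).det = 0 := by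
    rw [← Matrix.exists_mulVec_eq_zero_iff]
    apply exists_congr; intro w
    apply and_congr_right'
    rw [Matrix.sub_mulVec, Matrix.smul_mulVec, Matrix.one_mulVec, sub_eq_zero, eq_comm]
  rw [L1, L2, dHc, ← hPW]
  constructor
  · intro h
    rcases mul_eq_zero.mp h with h | h
    · exact absurd h hPdet
    · rw [h, mul_zero]
  · intro h
    rcases mul_eq_zero.mp h with h | h
    · rcases mul_eq_zero.mp h with h | h
      · exact absurd h hEdet
      · exact absurd h hFdet
    · rw [h, mul_zero]
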